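/- In the weighted CPS-3F reduction construction, the condition d_dF(A', B') ≤ 1 forces that for every i with 1 ≤ i ≤ n, if A' contains a_{2i-1} = (i,1) and not a_{2i}, and B' contains at least one of b_{2i-1}, b_{2i}, then B' contains b_{2i-1} = (i, 0); symmetrically, if A' contains a_{2i} and not a_{2i-1}, then B' cannot contain b_{2i-1} without containing b_{2i}. More precisely: for each i, at least one of the following holds: (a_{2i-1} ∈ A' and b_{2i-1} ∈ B') or (a_{2i} ∈ A' and b_{2i} ∈ B'), provided A' contains at least one of a_{2i-1}, a_{2i} and B' contains at least one of b_{2i-1}, b_{2i}. -/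

import Mathlib

/-- One step of a monotone coupling on 0-based index pairs:
each index advances by 0 or 1, and at least one advances. -/
def StepN (p q : ℕ × ℕ) : Prop :=
  p.1 ≤ q.1 ∧ q.1 ≤ p.1 + 1 ∧ p.2 ≤ q.2 ∧ q.2 ≤ p.2 + 1 ∧ p ≠ q

/-- A coupling of sequences of lengths `la` and `lb`: starts at `(0,0)`,
ends at `(la-1, lb-1)`, and advances by `StepN`. -/
def IsCouplingL (la lb : ℕ) (c : List (ℕ × ℕ)) : Prop :=
  c.head? = some (0, 0) ∧ c.getLast? = some (la - 1, lb - 1) ∧ c.Chain' StepN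

/-- The maximal pointwise distance along a coupling. -/
noncomputable def costL {X : Type*} [MetricSpace X] [Inhabited X]
    (P Q : List X) (c : List (ℕ × ℕ)) : ℝ :=
  (c.map (fun p => dist (P.getD p.1 default) (Q.getD p.2 default))).foldr max 0

/-- The discrete Fréchet distance of two finite sequences (lists) of points. -/
noncomputable def dFL {X : Type*} [MetricSpace X] [Inhabited X] (P Q : List X) : ℝ :=
  sInf { r | ∃ c, IsCouplingL P.length Q.length c ∧ costL P Q c = r }

abbrev Pt := EuclideanSpace ℝ (Fin 2)

noncomputable def pt (x y : ℝ) : Pt := WithLp.toLp 2 ![x, y]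

/-- The (unweighted) chain `A` of the reduction. -/
noncomputable def ptsA (n : ℕ) : List Pt :=
  (List.finRange n).flatMap
    (fun i => [pt ((i : ℝ) + 1) 1, pt ((i : ℝ) + 1 + 0.2) 1])

/-- The (unweighted) chain `B` of the reduction. -/
noncomputable def ptsB (n : ℕ) : List Pt :=
  (List.finRange n).flatMap
    (fun i => [pt ((i : ℝ) + 1) 0, pt ((i : ℝ) + 1 + 0.2) 0])

/-! ### Auxiliary lemmas -/

/-- A staircase path, used to witness the existence of couplings. -/
def stair : ℕ → ℕ → List (ℕ × ℕ)
  | 0, 0 => [(0,0)]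
  | a+1, b => stair a b ++ [(a+1, b)]
  | 0, b+1 => stair 0 b ++ [(0, b+1)]

lemma stair_zero_succ (b : ℕ) : stair 0 (b+1) = stair 0 b ++ [(0, b+1)] := by rw [stair]
lemma stair_succ (a b : ℕ) : stair (a+1) b = stair a b ++ [(a+1, b)] := by rw [stair]

lemma stair_spec : ∀ a b : ℕ, (stair a b).head? = some (0,0) ∧
    (stair a b).getLast? = some (a, b) ∧ (stair a b).Chain' StepN := by
  intro a
  induction a with
  | zero =>
    intro b
    induction b with
    | zero => exact ⟨by simp [stair], by simp [stair], by rw [stair]; exact List.isChain_singleton _⟩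
    | succ b ihb =>
      obtain ⟨h1, h2, h3⟩ := ihb
      rw [stair_zero_succ]
      refine ⟨by rw [List.head?_append, h1]; rfl, List.getLast?_concat, ?_⟩
      simp only [List.Chain']; rw [List.isChain_append]
      refine ⟨h3, List.isChain_singleton _, ?_⟩
      intro x hx y hy
      rw [h2] at hx
      simp at hx hy
      subst hx; subst hy
      exact ⟨le_refl _, by omega, by omega, by omega, by simp⟩
  | succ a iha =>
    intro b
    obtain ⟨h1, h2, h3⟩ := iha b
    rw [stair_succ]
    refine ⟨by rw [List.head?_append, h1]; rfl, List.getLast?_concat, ?_⟩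
    simp only [List.Chain']; rw [List.isChain_append]
    refine ⟨h3, List.isChain_singleton _, ?_⟩
    intro x hx y hy
    rw [h2] at hx
    simp at hx hy
    subst hx; subst hy
    exact ⟨by omega, by omega, le_refl _, by omega, by simp⟩

lemma exists_coupling (la lb : ℕ) : ∃ c, IsCouplingL la lb c :=
  ⟨stair (la-1) (lb-1), (stair_spec _ _).1, (stair_spec _ _).2.1, (stair_spec _ _).2.2⟩

lemma chain_mono : ∀ (c : List (ℕ × ℕ)) (p q : ℕ × ℕ), c.Chain' StepN →
    c.head? = some p → c.getLast? = some q → p.2 ≤ q.2 := by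
  intro c
  induction c with
  | nil => simp
  | cons x t ih =>
    intro p q hc hp hq
    have hp' : x = p := by simpa using hp
    subst hp'
    cases t with
    | nil =>
      have hq' : x = q := by simpa using hq
      subst hq'
      exact le_refl _
    | cons y t' =>
      rcases List.isChain_cons_cons.mp hc with ⟨hxy, hc'⟩
      have h1 := ih y q hc' rfl (by simpa using hq)
      have h2 := hxy.2.2.1
      omega

lemma chain_cover : ∀ (c : List (ℕ × ℕ)) (p q : ℕ × ℕ), c.Chain' StepN →
    c.head? = some p → c.getLast? = some q →
    ∀ j, p.1 ≤ j → j ≤ q.1 → ∃ k, k ≤ q.2 ∧ (j, k) ∈ c := by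
  intro c
  induction c with
  | nil => simp
  | cons x t ih =>
    intro p q hc hp hq j h1 h2
    have hp' : x = p := by simpa using hp
    subst hp'
    cases t with
    | nil =>
      have hq' : x = q := by simpa using hq
      subst hq'
      have hjx : j = x.1 := le_antisymm h2 h1
      exact ⟨x.2, le_refl _, by simp [List.mem_cons, Prod.ext_iff, hjx]⟩
    | cons y t' =>
      rcases List.isChain_cons_cons.mp hc with ⟨hxy, hc'⟩
      have hq' : (y :: t').getLast? = some q := by simpa using hq
      by_cases hj : j = x.1
      · exact ⟨x.2, chain_mono (x :: y :: t') x q hc (by simp) hq,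
          by simp [List.mem_cons, Prod.ext_iff, hj]⟩
      · have hy : y.1 ≤ j := by have := hxy.2.1; omega
        obtain ⟨k, hk, hmem⟩ := ih y q hc' rfl hq' j hy h2
        exact ⟨k, hk, List.mem_cons_of_mem _ hmem⟩

lemma le_foldr_max {l : List ℝ} {x : ℝ} (hx : x ∈ l) : x ≤ l.foldr max 0 := by
  induction l with
  | nil => simp at hx
  | cons a t ih =>
    rcases List.mem_cons.mp hx with h | h
    · subst h; exact le_max_left _ _
    · exact le_trans (ih h) (le_max_right _ _)

lemma dist_le_costL {X : Type*} [MetricSpace X] [Inhabited X]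
    (P Q : List X) (c : List (ℕ × ℕ)) {p : ℕ × ℕ} (hp : p ∈ c) :
    dist (P.getD p.1 default) (Q.getD p.2 default) ≤ costL P Q c :=
  le_foldr_max (List.mem_map_of_mem hp)

lemma pt_dist (x y x' y' : ℝ) :
    dist (pt x y) (pt x' y') = Real.sqrt ((x - x')^2 + (y - y')^2) := by
  rw [EuclideanSpace.dist_eq]
  simp [pt, Fin.sum_univ_two, Real.dist_eq, sq_abs]

lemma pt_inj {x y x' y' : ℝ} (h : pt x y = pt x' y') : x = x' ∧ y = y' :=
  ⟨by simpa [pt] using congrArg (· 0) h, by simpa [pt] using congrArg (· 1) h⟩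

lemma mem_ptsA {n : ℕ} {a : Pt} (h : a ∈ ptsA n) :
    ∃ (m : Fin n) (δ : ℝ), (δ = 0 ∨ δ = 0.2) ∧ a = pt ((m : ℝ) + 1 + δ) 1 := by
  simp [ptsA, List.mem_flatMap] at h
  obtain ⟨m, h | h⟩ := h
  · exact ⟨m, 0, Or.inl rfl, by rw [add_zero]; exact h⟩
  · exact ⟨m, 0.2, Or.inr rfl, h⟩

lemma mem_ptsB {n : ℕ} {a : Pt} (h : a ∈ ptsB n) :
    ∃ (m : Fin n) (δ : ℝ), (δ = 0 ∨ δ = 0.2) ∧ a = pt ((m : ℝ) + 1 + δ) 0 := by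
  simp [ptsB, List.mem_flatMap] at h
  obtain ⟨m, h | h⟩ := h
  · exact ⟨m, 0, Or.inl rfl, by rw [add_zero]; exact h⟩
  · exact ⟨m, 0.2, Or.inr rfl, h⟩

lemma close_eq {n : ℕ} {u v : Fin n} {δ ε : ℝ} (hδ : δ = 0 ∨ δ = 0.2) (hε : ε = 0 ∨ ε = 0.2)
    (h : ((u : ℝ) + δ - ((v : ℝ) + ε))^2 < 0.0201) : (u : ℝ) = (v : ℝ) ∧ δ = ε := by
  have h1 : (u : ℝ) = (v : ℝ) := by
    rcases Nat.lt_trichotomy (u : ℕ) (v : ℕ) with hlt | heq | hgt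
    · exfalso
      have hc : (u : ℝ) + 1 ≤ (v : ℝ) := by exact_mod_cast hlt
      rcases hδ with rfl | rfl <;> rcases hε with rfl | rfl <;> nlinarith
    · exact_mod_cast heq
    · exfalso
      have hc : (v : ℝ) + 1 ≤ (u : ℝ) := by exact_mod_cast hgt
      rcases hδ with rfl | rfl <;> rcases hε with rfl | rfl <;> nlinarith
  refine ⟨h1, ?_⟩
  rcases hδ with rfl | rfl <;> rcases hε with rfl | rfl <;>
    first
      | rfl
      | (exfalso; rw [h1] at h; nlinarith)

/-- Key lemma: a point of `A'` forces its vertical drop to lie in `B'`. -/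
lemma key_drop (n : ℕ) (A' B' : List Pt)
    (hA' : A'.Sublist (ptsA n)) (hB' : B'.Sublist (ptsB n))
    (hd : dFL A' B' ≤ 1) {a : Pt} (ha : a ∈ A') (hBne : B' ≠ []) :
    ∃ x : ℝ, a = pt x 1 ∧ pt x 0 ∈ B' := by
  have hne : Set.Nonempty {r | ∃ c, IsCouplingL A'.length B'.length c ∧ costL A' B' c = r} := by
    obtain ⟨c, hc⟩ := exists_coupling A'.length B'.length
    exact ⟨_, c, hc, rfl⟩
  have hlt : dFL A' B' < 1.01 := lt_of_le_of_lt hd (by norm_num)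
  have hex : ∃ r ∈ {r | ∃ c, IsCouplingL A'.length B'.length c ∧ costL A' B' c = r},
      r < 1.01 := by
    by_contra hcon
    push_neg at hcon
    exact absurd (le_csInf hne hcon) (not_le.mpr hlt)
  obtain ⟨r, ⟨c, ⟨hch, hcl, hcc⟩, hcost⟩, hrlt⟩ := hex
  obtain ⟨j, hj, hje⟩ := List.mem_iff_getElem.mp ha
  obtain ⟨k, hk, hmem⟩ := chain_cover c (0,0) (A'.length - 1, B'.length - 1) hcc hch hcl
    j (Nat.zero_le _) (by omega)
  have hBlen : B'.length ≠ 0 := by simpa [List.length_eq_zero_iff] using hBne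
  have hkb : k < B'.length := by simp at hk; omega
  have hdist : dist (A'.getD j default) (B'.getD k default) ≤ costL A' B' c :=
    dist_le_costL _ _ _ hmem
  have hdlt : dist (A'.getD j default) (B'.getD k default) < 1.01 :=
    lt_of_le_of_lt hdist (hcost ▸ hrlt)
  have hgA : A'.getD j default = a := by rw [List.getD_eq_getElem _ _ hj]; exact hje
  have hbmem : B'.getD k default ∈ B' := by
    rw [List.getD_eq_getElem _ _ hkb]; exact List.getElem_mem _
  obtain ⟨ia, δ, hδ, hea⟩ := mem_ptsA (hA'.subset ha)
  obtain ⟨ib, ε, hε, heb⟩ := mem_ptsB (hB'.subset hbmem)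
  rw [hgA, hea, heb, pt_dist] at hdlt
  have hsq : ((ia : ℝ) + 1 + δ - ((ib : ℝ) + 1 + ε))^2 + (1 - 0)^2 < 1.01^2 :=
    (Real.sqrt_lt' (by norm_num)).mp hdlt
  have hsq' : ((ia : ℝ) + δ - ((ib : ℝ) + ε))^2 < 0.0201 := by nlinarith
  obtain ⟨h1, h2⟩ := close_eq hδ hε hsq'
  refine ⟨(ia : ℝ) + 1 + δ, hea, ?_⟩
  rw [h1, h2, ← heb]
  exact hbmem

/-- The condition `d_dF(A',B') ≤ 1` forces that, for every `i`, whenever `A'`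
contains one of `a_{2i-1}, a_{2i}` and `B'` contains one of `b_{2i-1}, b_{2i}`,
then `a_{2i-1} ∈ A' ∧ b_{2i-1} ∈ B'` or `a_{2i} ∈ A' ∧ b_{2i} ∈ B'`. -/
theorem wcps_alignment (n : ℕ) (A' B' : List Pt)
    (hA' : A'.Sublist (ptsA n)) (hB' : B'.Sublist (ptsB n))
    (hd : dFL A' B' ≤ 1) :
    ∀ i : Fin n,
      (pt ((i : ℝ) + 1) 1 ∈ A' ∨ pt ((i : ℝ) + 1 + 0.2) 1 ∈ A') →
      (pt ((i : ℝ) + 1) 0 ∈ B' ∨ pt ((i : ℝ) + 1 + 0.2) 0 ∈ B') →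
      (pt ((i : ℝ) + 1) 1 ∈ A' ∧ pt ((i : ℝ) + 1) 0 ∈ B') ∨
      (pt ((i : ℝ) + 1 + 0.2) 1 ∈ A' ∧ pt ((i : ℝ) + 1 + 0.2) 0 ∈ B') := by
  intro i hA hB
  have hBne : B' ≠ [] := by rcases hB with h | h <;> exact List.ne_nil_of_mem h
  rcases hA with h | h
  · left
    refine ⟨h, ?_⟩
    obtain ⟨x, hx, hxB⟩ := key_drop n A' B' hA' hB' hd h hBne
    rw [(pt_inj hx).1]
    exact hxB
  · right
    refine ⟨h, ?_⟩
    obtain ⟨x, hx, hxB⟩ := key_drop n A' B' hA' hB' hd h hBne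
    rw [(pt_inj hx).1]
    exact hxB
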